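/- Let Y = {Y_1,…,Y_s} be a partition of H and Z = {Z_1,…,Z_t} be a partition of N, with Z_{k*} a block of Z of maximal size. If there exists a resolute refinement of the Pareto social choice correspondence Par which is Y-anonymous, Z-neutral and immune to the reversal bias, then gcd( gcd(|Y_1|,…,|Y_s|), lcm((|Z_{k*}|)!, 2) ) = 1. -/

import Mathlib

/-!
Common framework: preferences on `n ≥ 2` alternatives (`Fin n`) expressed by `h ≥ 2`
individuals (`Fin h`).  Following the paper, a linear order `q ∈ L(N)` is identified with
the permutation of `Fin n` sending each rank position (`0` = best) to the alternative
occupying that position.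
-/

/-- A preference relation (a linear order on the set `Fin n` of alternatives), identified
with the permutation sending each rank position (`0` = best) to the alternative at
that position. -/
abbrev Pref (n : ℕ) := Equiv.Perm (Fin n)

/-- `x ⪰_q y` : alternative `x` is weakly preferred to `y` in `q`. -/
def prefGE {n : ℕ} (q : Pref n) (x y : Fin n) : Prop := q.symm x ≤ q.symm y

/-- `x ≻_q y` : alternative `x` is strictly preferred to `y` in `q`. -/
def prefGT {n : ℕ} (q : Pref n) (x y : Fin n) : Prop := q.symm x < q.symm y

instance {n : ℕ} (q : Pref n) (x y : Fin n) : Decidable (prefGT q x y) :=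
  inferInstanceAs (Decidable (q.symm x < q.symm y))

/-- A preference profile: one preference relation for each individual. -/
abbrev Profile (n h : ℕ) := Fin h → Pref n

/-- A social choice correspondence (the nonemptiness of its values is `IsSCC`). -/
abbrev SCC (n h : ℕ) := Profile n h → Set (Fin n)

/-- `C` has nonempty values, i.e. `C` really is a social choice correspondence. -/
def IsSCC {n h : ℕ} (C : SCC n h) : Prop := ∀ p, (C p).Nonempty

/-- `C` is resolute: it always selects exactly one alternative. -/
def Resolute {n h : ℕ} (C : SCC n h) : Prop := ∀ p, ∃ x, C p = {x}

/-- `C'` is a refinement of `C`. -/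
def Refines {n h : ℕ} (C' C : SCC n h) : Prop := ∀ p, C' p ⊆ C p

/-- The order-reversing permutation `ρ₀ : r ↦ n - r + 1`. -/
def rho0 (n : ℕ) : Equiv.Perm (Fin n) := Fin.revPerm

/-- The profile `p^{(id,id,ρ₀)}` obtained from `p` by reversing every individual
preference. -/
def revProfile {n h : ℕ} (p : Profile n h) : Profile n h := fun i => p i * rho0 n

/-- `C` is immune to the reversal bias. -/
def Immune {n h : ℕ} (C : SCC n h) : Prop :=
  ∀ (p : Profile n h) (x : Fin n), C p = {x} → C (revProfile p) ≠ C p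

/-- `Y` is a partition: nonempty, pairwise disjoint, covering blocks. -/
def IsPartition {α : Type*} {s : ℕ} (Y : Fin s → Finset α) : Prop :=
  (∀ j, (Y j).Nonempty) ∧ (∀ j k, j ≠ k → Disjoint (Y j) (Y k)) ∧ (∀ a, ∃ j, a ∈ Y j)

/-- The Pareto social choice correspondence: `x` is selected iff no alternative
unanimously beats it, i.e. for every other `y` some individual prefers `x` to `y`. -/
def Par {n h : ℕ} : SCC n h :=
  fun p => {x | ∀ y, y ≠ x → ∃ i, prefGT (p i) x y}

/-- The profile `p^{(φ,ψ,ρ)}`: individual `i` is renamed `φ(i)`, alternative `x` is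
renamed `ψ(x)`, ranks are moved by `ρ`. -/
def pact {n h : ℕ} (φ : Equiv.Perm (Fin h)) (ψ ρ : Equiv.Perm (Fin n))
    (p : Profile n h) : Profile n h :=
  fun i => ψ * p (φ⁻¹ i) * ρ

/-- Anonymity with respect to the partition `Y` of the individuals. -/
def YAnonymous {n h s : ℕ} (Y : Fin s → Finset (Fin h)) (C : SCC n h) : Prop :=
  ∀ (p : Profile n h) (φ : Equiv.Perm (Fin h)),
    (∀ j, (Y j).image φ = Y j) → C (pact φ 1 1 p) = C p

/-- Neutrality with respect to the partition `Z` of the alternatives. -/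
def ZNeutral {n h t : ℕ} (Z : Fin t → Finset (Fin n)) (C : SCC n h) : Prop :=
  ∀ (p : Profile n h) (ψ : Equiv.Perm (Fin n)),
    (∀ k, (Z k).image ψ = Z k) → C (pact 1 ψ 1 p) = ψ '' C p

section AuxLemmas

lemma pow_mod_eq {G : Type*} [Group G] (g : G) {q : ℕ} (hg : g ^ q = 1) (k : ℕ) :
    g ^ (k % q) = g ^ k := by
  conv_rhs => rw [← Nat.div_add_mod k q]
  rw [pow_add, pow_mul, hg, one_pow, one_mul]

lemma pow_val_add_one {G : Type*} [Group G] (g : G) {q : ℕ} (hq : 2 ≤ q) (hg : g ^ q = 1)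
    (b : ZMod q) : g ^ ((b + 1).val) = g ^ (b.val + 1) := by
  haveI : NeZero q := ⟨by omega⟩
  haveI : Fact (1 < q) := ⟨hq⟩
  rw [ZMod.val_add, ZMod.val_one, pow_mod_eq g hg]

lemma exists_phi {h s q : ℕ} (hq : 0 < q) (Y : Fin s → Finset (Fin h)) (hY : IsPartition Y)
    (hdvd : ∀ j, q ∣ (Y j).card) :
    ∃ (φ : Equiv.Perm (Fin h)) (a : Fin h → ZMod q),
      (∀ j, (Y j).image φ = Y j) ∧ (∀ i, a (φ i) = a i + 1) := by
  haveI : NeZero q := ⟨hq.ne'⟩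
  obtain ⟨hne, hdisj, hcov⟩ := hY
  choose blk hblk using hcov
  have huniq : ∀ i j, i ∈ Y j → blk i = j := by
    intro i j hij
    by_contra hne'
    exact (Finset.disjoint_left.mp (hdisj _ _ hne') (hblk i)) hij
  have hcard : ∀ j, Fintype.card {x // x ∈ Y j} = Fintype.card (ZMod q × Fin ((Y j).card / q)) := by
    intro j
    simp [Fintype.card_coe, ZMod.card, Nat.mul_div_cancel' (hdvd j)]
  let σ : ∀ j, {x // x ∈ Y j} ≃ ZMod q × Fin ((Y j).card / q) :=
    fun j => Fintype.equivOfCardEq (hcard j)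
  let Fd : ZMod q → Fin h → Fin h := fun d i =>
    ((σ (blk i)).symm (((σ (blk i)) ⟨i, hblk i⟩).1 + d, ((σ (blk i)) ⟨i, hblk i⟩).2) : {x // x ∈ Y (blk i)}).1
  have hFmem : ∀ d i, Fd d i ∈ Y (blk i) := fun d i =>
    ((σ (blk i)).symm (((σ (blk i)) ⟨i, hblk i⟩).1 + d, ((σ (blk i)) ⟨i, hblk i⟩).2)).2
  have hblkF : ∀ d i, blk (Fd d i) = blk i := fun d i => huniq _ _ (hFmem d i)
  have hσF : ∀ d i (hm : Fd d i ∈ Y (blk i)),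
      (σ (blk i)) ⟨Fd d i, hm⟩ =
        (((σ (blk i)) ⟨i, hblk i⟩).1 + d, ((σ (blk i)) ⟨i, hblk i⟩).2) := by
    intro d i hm
    have h1 : (⟨Fd d i, hm⟩ : {x // x ∈ Y (blk i)}) =
        (σ (blk i)).symm (((σ (blk i)) ⟨i, hblk i⟩).1 + d, ((σ (blk i)) ⟨i, hblk i⟩).2) :=
      Subtype.ext rfl
    rw [h1, Equiv.apply_symm_apply]
  have hFd_spec : ∀ (d : ZMod q) i j (hm : i ∈ Y j), Fd d i =
      ((σ j).symm (((σ j) ⟨i, hm⟩).1 + d, ((σ j) ⟨i, hm⟩).2) : {x // x ∈ Y j}).1 := by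
    intro d i j hm
    have := huniq i j hm
    subst this
    rfl
  have hcomp : ∀ d e i, Fd d (Fd e i) = Fd (d + e) i := by
    intro d e i
    rw [hFd_spec d (Fd e i) (blk i) (hFmem e i), hσF e i (hFmem e i)]
    show ((σ (blk i)).symm (((σ (blk i)) ⟨i, hblk i⟩).1 + e + d, _)).1 = _
    have harith : ((σ (blk i)) ⟨i, hblk i⟩).1 + e + d = ((σ (blk i)) ⟨i, hblk i⟩).1 + (d + e) := by
      ring
    rw [harith]
  have hF0 : ∀ i, Fd 0 i = i := by
    intro i
    show ((σ (blk i)).symm (((σ (blk i)) ⟨i, hblk i⟩).1 + 0, ((σ (blk i)) ⟨i, hblk i⟩).2)).1 = i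
    rw [add_zero]
    rw [show ((((σ (blk i)) ⟨i, hblk i⟩).1, ((σ (blk i)) ⟨i, hblk i⟩).2) =
      (σ (blk i)) ⟨i, hblk i⟩) from rfl, Equiv.symm_apply_apply]
  let φ : Equiv.Perm (Fin h) :=
    ⟨Fd 1, Fd (-1),
      fun i => by rw [hcomp, neg_add_cancel]; exact hF0 i,
      fun i => by rw [hcomp, add_neg_cancel]; exact hF0 i⟩
  have hφ_apply : ∀ i, φ i = Fd 1 i := fun i => rfl
  refine ⟨φ, fun i => ((σ (blk i)) ⟨i, hblk i⟩).1, ?_, ?_⟩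
  · intro j
    apply Finset.eq_of_subset_of_card_le
    · intro y hy
      obtain ⟨x, hx, rfl⟩ := Finset.mem_image.mp hy
      have h2 : φ x ∈ Y (blk x) := hFmem 1 x
      rwa [huniq x j hx] at h2
    · rw [Finset.card_image_of_injective _ φ.injective]
  · intro i
    have hspec : ∀ (x : Fin h) j (hm : x ∈ Y j),
        ((σ (blk x)) ⟨x, hblk x⟩).1 = ((σ j) ⟨x, hm⟩).1 := by
      intro x j hm
      have := huniq x j hm
      subst this
      rfl
    show ((σ (blk (φ i))) ⟨φ i, hblk (φ i)⟩).1 = _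
    rw [hspec (φ i) (blk i) (hFmem 1 i)]
    rw [show (⟨φ i, hFmem 1 i⟩ : {x // x ∈ Y (blk i)}) = ⟨Fd 1 i, hFmem 1 i⟩ from rfl]
    rw [hσF 1 i (hFmem 1 i)]

lemma exists_topPerm {n q : ℕ} (T : Finset (Fin n)) (hT : T.card = q) :
    ∃ p₀ : Equiv.Perm (Fin n), ∀ r : Fin n, p₀ r ∈ T ↔ (r : ℕ) < q := by
  have hqn : q ≤ n := by
    have := T.card_le_univ
    simp only [Finset.card_univ, Fintype.card_fin] at this
    omega
  have hcc : Tᶜ.card = n - q := by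
    rw [Finset.card_compl, hT, Fintype.card_fin]
  have hnq : n = q + (n - q) := by omega
  let e1 : Fin q ≃ {x : Fin n // x ∈ T} := (finCongr hT.symm).trans T.equivFin.symm
  let e2 : Fin (n - q) ≃ {x : Fin n // ¬ x ∈ T} :=
    ((finCongr hcc.symm).trans Tᶜ.equivFin.symm).trans
      (Equiv.subtypeEquivRight fun x => Finset.mem_compl)
  let e3 : {x : Fin n // x ∈ T} ⊕ {x : Fin n // ¬ x ∈ T} ≃ Fin n := Equiv.sumCompl _
  refine ⟨(finCongr hnq).trans (finSumFinEquiv.symm.trans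
      ((Equiv.sumCongr e1 e2).trans e3)), ?_⟩
  intro r
  rcases h' : finSumFinEquiv.symm (finCongr hnq r) with a | b
  · have hr : (r : ℕ) = (a : ℕ) := by
      have h2 := congrArg finSumFinEquiv h'
      rw [Equiv.apply_symm_apply] at h2
      have hval := congrArg Fin.val h2
      simpa using hval
    have hp : ((finCongr hnq).trans (finSumFinEquiv.symm.trans
        ((Equiv.sumCongr e1 e2).trans e3))) r = ↑(e1 a) := by
      simp only [Equiv.trans_apply, h', Equiv.sumCongr_apply, Sum.map_inl,
        Equiv.sumCompl_apply_inl, e3]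
    rw [hp, hr]
    exact iff_of_true (e1 a).2 a.isLt
  · have hr : (r : ℕ) = q + (b : ℕ) := by
      have h2 := congrArg finSumFinEquiv h'
      rw [Equiv.apply_symm_apply] at h2
      have hval := congrArg Fin.val h2
      simpa using hval
    have hp : ((finCongr hnq).trans (finSumFinEquiv.symm.trans
        ((Equiv.sumCongr e1 e2).trans e3))) r = ↑(e2 b) := by
      simp only [Equiv.trans_apply, h', Equiv.sumCongr_apply, Sum.map_inr,
        Equiv.sumCompl_apply_inr, e3]
    rw [hp]
    exact iff_of_false (e2 b).2 (by omega)

lemma exists_psi {n q : ℕ} (hq2 : 2 ≤ q) (T : Finset (Fin n)) (hT : T.card = q) :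
    ∃ ψ : Equiv.Perm (Fin n),
      ψ ^ q = 1 ∧ (∀ x, x ∈ T → ψ x ∈ T) ∧ (∀ x, x ∉ T → ψ x = x) ∧ (∀ x ∈ T, ψ x ≠ x) := by
  haveI : NeZero q := ⟨by omega⟩
  haveI : Fact (1 < q) := ⟨by omega⟩
  let f : ZMod q ≃ {x : Fin n // x ∈ T} :=
    Fintype.equivOfCardEq (by rw [ZMod.card, Fintype.card_coe, hT])
  let ψ := Equiv.Perm.extendDomain (Equiv.addRight (1 : ZMod q)) f
  have hap : ∀ (x : Fin n) (hx : x ∈ T), ψ x = ↑(f (f.symm ⟨x, hx⟩ + 1)) := by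
    intro x hx
    have h1 : x = ↑(f (f.symm ⟨x, hx⟩)) := by rw [Equiv.apply_symm_apply]
    conv_lhs => rw [h1]
    rw [Equiv.Perm.extendDomain_apply_image]
    simp
  have hfix : ∀ x, x ∉ T → ψ x = x := fun x hx =>
    Equiv.Perm.extendDomain_apply_not_subtype _ _ hx
  have hfwd : ∀ x, x ∈ T → ψ x ∈ T := fun x hx => by rw [hap x hx]; exact (f _).2
  have hmove : ∀ x ∈ T, ψ x ≠ x := by
    intro x hx he
    rw [hap x hx] at he
    have h1 : f (f.symm ⟨x, hx⟩ + 1) = ⟨x, hx⟩ := Subtype.ext he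
    have h2 := f.injective (h1.trans (f.apply_symm_apply ⟨x, hx⟩).symm)
    have h3 : (1 : ZMod q) = 0 := by
      have h4 : f.symm ⟨x, hx⟩ + 1 = f.symm ⟨x, hx⟩ + 0 := by rw [add_zero]; exact h2
      exact add_left_cancel h4
    exact one_ne_zero h3
  have hpow : ψ ^ q = 1 := by
    have hk : ∀ (k : ℕ), ψ ^ k = Equiv.Perm.extendDomain ((Equiv.addRight (1 : ZMod q)) ^ k) f := by
      intro k
      induction k with
      | zero => simp [Equiv.Perm.extendDomain_one]
      | succ k ih => rw [pow_succ, pow_succ, ih, Equiv.Perm.extendDomain_mul]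
    rw [hk q]
    have hone : (Equiv.addRight (1 : ZMod q)) ^ q = 1 := by
      have hx : ∀ (k : ℕ) (x : ZMod q), ((Equiv.addRight (1 : ZMod q)) ^ k) x = x + k := by
        intro k
        induction k with
        | zero => intro x; simp
        | succ k ih =>
          intro x
          rw [pow_succ, Equiv.Perm.mul_apply, ih]
          push_cast
          simp [Equiv.coe_addRight]
          ring
      ext x
      rw [hx q x]
      simp [ZMod.natCast_self]
    rw [hone, Equiv.Perm.extendDomain_one]
  exact ⟨ψ, hpow, hfwd, hfix, hmove⟩

end AuxLemmas


/-- Theorem `super`(ii): if the Pareto scc admits a resolute refinement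
which is `Y`-anonymous, `Z`-neutral and immune to the reversal bias, then
`gcd(gcd(|Y_1|,…,|Y_s|), lcm((|Z_{k*}|)!, 2)) = 1`. -/
theorem statement1 {h n s t : ℕ} (hh : 2 ≤ h) (hn : 2 ≤ n)
    (Y : Fin s → Finset (Fin h)) (hY : IsPartition Y)
    (Z : Fin t → Finset (Fin n)) (hZ : IsPartition Z)
    (kstar : Fin t) (hks : ∀ k, (Z k).card ≤ (Z kstar).card)
    (C : SCC n h) (hres : Resolute C) (href : Refines C Par)
    (hanon : YAnonymous Y C) (hneut : ZNeutral Z C) (himm : Immune C) :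
    Nat.gcd (Finset.univ.gcd fun j => (Y j).card)
      (Nat.lcm (Nat.factorial (Z kstar).card) 2) = 1 := by
  by_contra hne
  obtain ⟨q, hqp, hqdvd⟩ := Nat.exists_prime_and_dvd hne
  have hqG : q ∣ Finset.univ.gcd fun j => (Y j).card := hqdvd.trans (Nat.gcd_dvd_left _ _)
  have hqY : ∀ j, q ∣ (Y j).card := fun j => hqG.trans (Finset.gcd_dvd (Finset.mem_univ j))
  have hqL : q ∣ Nat.lcm (Nat.factorial (Z kstar).card) 2 :=
    hqdvd.trans (Nat.gcd_dvd_right _ _)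
  have hqml : q ∣ Nat.factorial (Z kstar).card * 2 :=
    hqL.trans (Nat.lcm_dvd (dvd_mul_right _ _) (dvd_mul_left _ _))
  rcases (Nat.Prime.dvd_mul hqp).mp hqml with hdvdfac | hdvd2
  · -- Case A : q ≤ |Z kstar|
    have hqm : q ≤ (Z kstar).card := (Nat.Prime.dvd_factorial hqp).mp hdvdfac
    have hq2' : 2 ≤ q := hqp.two_le
    obtain ⟨T, hTZ, hTcard⟩ := Finset.exists_subset_card_eq hqm
    obtain ⟨ψ, hψq, hfwd, hfix, hmove⟩ := exists_psi hq2' T hTcard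
    obtain ⟨p₀, hp₀⟩ := exists_topPerm T hTcard
    obtain ⟨φ, a, hφY, hφa⟩ := exists_phi (by omega) Y hY hqY
    set p : Profile n h := fun i => ψ ^ (a i).val * p₀ with hpdef
    have hpowT : ∀ (k : ℕ) (x : Fin n), (ψ ^ k) x ∈ T ↔ x ∈ T := by
      intro k
      induction k with
      | zero => intro x; simp
      | succ k ih =>
        intro x
        rw [pow_succ, Equiv.Perm.mul_apply, ih (ψ x)]
        constructor
        · intro hmem
          by_contra hx
          rw [hfix x hx] at hmem
          exact hx hmem
        · exact hfwd x
    have hsymmT : ∀ (k : ℕ) (x : Fin n), ((ψ ^ k).symm x ∈ T) ↔ x ∈ T := by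
      intro k x
      conv_rhs => rw [← Equiv.apply_symm_apply (ψ ^ k) x]
      exact (hpowT k _).symm
    have hdom : ∀ (i : Fin h) (u v : Fin n), u ∈ T → v ∉ T → prefGT (p i) u v := by
      intro i u v hu hv
      have e : ∀ z, (p i).symm z = p₀.symm ((ψ ^ (a i).val).symm z) := fun z => rfl
      have hu' : (ψ ^ (a i).val).symm u ∈ T := (hsymmT _ _).mpr hu
      have hv' : (ψ ^ (a i).val).symm v ∉ T := fun hc => hv ((hsymmT _ _).mp hc)
      have h1 : ((p₀.symm ((ψ ^ (a i).val).symm u) : Fin n) : ℕ) < q :=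
        (hp₀ _).mp (by rw [Equiv.apply_symm_apply]; exact hu')
      have h2 : ¬ ((p₀.symm ((ψ ^ (a i).val).symm v) : Fin n) : ℕ) < q := fun hc =>
        hv' (by rw [← Equiv.apply_symm_apply p₀ ((ψ ^ (a i).val).symm v)]; exact (hp₀ _).mpr hc)
      show (p i).symm u < (p i).symm v
      rw [e u, e v, Fin.lt_def]
      omega
    obtain ⟨x, hx⟩ := hres p
    have hxC : x ∈ C p := by rw [hx]; exact Set.mem_singleton x
    have hxPar : x ∈ Par p := href p hxC
    have hT0 : T.Nonempty := by rw [← Finset.card_pos, hTcard]; omega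
    obtain ⟨t₀, ht₀⟩ := hT0
    have hxT : x ∈ T := by
      by_contra hxT
      have hne' : t₀ ≠ x := fun he => hxT (he ▸ ht₀)
      obtain ⟨i, hi⟩ := hxPar t₀ hne'
      exact lt_asymm hi (hdom i t₀ x ht₀ hxT)
    have hψZ : ∀ k, (Z k).image ψ = Z k := by
      intro k
      apply Finset.eq_of_subset_of_card_le
      · intro y hy
        obtain ⟨z, hz, rfl⟩ := Finset.mem_image.mp hy
        by_cases hzT : z ∈ T
        · have hk : k = kstar := by
            by_contra hkk
            exact (Finset.disjoint_left.mp (hZ.2.1 k kstar hkk) hz) (hTZ hzT)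
          subst hk
          exact hTZ (hfwd z hzT)
        · rw [hfix z hzT]; exact hz
      · rw [Finset.card_image_of_injective _ ψ.injective]
    have hpact : pact 1 ψ 1 (pact φ 1 1 p) = p := by
      funext i
      simp only [pact, one_mul, mul_one, inv_one, Equiv.Perm.one_apply]
      have h1 : a i = a (φ⁻¹ i) + 1 := by
        have h2 := hφa (φ⁻¹ i)
        rwa [← Equiv.Perm.mul_apply, mul_inv_cancel, Equiv.Perm.one_apply] at h2
      show ψ * (ψ ^ (a (φ⁻¹ i)).val * p₀) = ψ ^ (a i).val * p₀
      rw [h1, pow_val_add_one ψ hq2' hψq, pow_succ', mul_assoc]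
    have hC1 := hanon p φ hφY
    have hC2 := hneut (pact φ 1 1 p) ψ hψZ
    rw [hpact, hC1, hx, Set.image_singleton] at hC2
    have hxψ : x = ψ x := Set.singleton_eq_singleton_iff.mp hC2
    exact hmove x hxT hxψ.symm
  · -- Case B : q = 2
    have hq2 : q = 2 := (Nat.prime_dvd_prime_iff_eq hqp Nat.prime_two).mp hdvd2
    subst hq2
    obtain ⟨φ, a, hφY, hφa⟩ := exists_phi (by norm_num) Y hY hqY
    set ρ : Equiv.Perm (Fin n) := rho0 n with hρdef
    have hρ : ρ ^ 2 = 1 := by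
      ext x
      simp [pow_succ, Equiv.Perm.mul_apply, rho0, hρdef]
    set p : Profile n h := fun i => ρ ^ (a i).val with hpdef
    obtain ⟨x, hx⟩ := hres p
    have hinv : pact φ 1 1 (revProfile p) = p := by
      funext i
      have h1 : a i = a (φ⁻¹ i) + 1 := by
        have h2 := hφa (φ⁻¹ i)
        rwa [← Equiv.Perm.mul_apply, mul_inv_cancel, Equiv.Perm.one_apply] at h2
      show (1 : Equiv.Perm (Fin n)) * (p (φ⁻¹ i) * rho0 n) * 1 = p i
      rw [one_mul, mul_one]
      show ρ ^ (a (φ⁻¹ i)).val * ρ = ρ ^ (a i).val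
      rw [h1, pow_val_add_one ρ (le_refl 2) hρ, pow_succ]
    have hCC := hanon (revProfile p) φ hφY
    rw [hinv] at hCC
    exact himm p x hx hCC.symm
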